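/- arXiv:1006.4928 — 3 statements merged into one kernel-verified Lean document; each statement's English description precedes it below -/
import Mathlib

section
/- Consider the splitting model on Z^d (d ≥ 1) with any valid splitting order, h < 1, n ≥ 0, and suppose the model stabilizes. For k ≥ 1 let Q_k(x) = {y ∈ Z^d : max_i |x_i − y_i| ≤ k} and T^{(k)} = {x : Q_k(x) ⊆ T}. Then for every x ∉ T^{(k)}: u(x) < 2(1−h)·(2d)^{(2k+1)^d}. In particular the bound depends only on k, d and h, not on n. -/
open scoped BigOperators

/-- The nearest neighbor of `x ∈ ℤ^d` obtained by shifting coordinate `i` by `ε`. -/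
def nbr {d : ℕ} (x : Fin d → ℤ) (i : Fin d) (ε : ℤ) : Fin d → ℤ :=
  Function.update x i (x i + ε)

/-- Nearest-neighbor adjacency in `ℤ^d`. -/
def Adj {d : ℕ} (x y : Fin d → ℤ) : Prop :=
  (∑ i, |x i - y i|) = 1

/-- The splitting model on `ℤ^d` with initial mass `n` at the origin and background
mass `h` at every other site, together with a splitting order: `S (t+1)` is the set
of sites that split at time `t+1` (a subset of the sites unstable at time `t`,
i.e. those of mass `≥ 1`), and the mass `η` evolves by Zhang's toppling rule:
a splitting site loses all its mass, distributing a fraction `1/(2d)` of it to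
each of its `2d` nearest neighbors. -/
structure SplittingModel (d : ℕ) (n h : ℝ) where
  η : ℕ → (Fin d → ℤ) → ℝ
  S : ℕ → Set (Fin d → ℤ)
  init_origin : η 0 0 = n
  init_other : ∀ x : Fin d → ℤ, x ≠ 0 → η 0 x = h
  S_zero : S 0 = ∅
  S_subset : ∀ t, S (t + 1) ⊆ {x | 1 ≤ η t x}
  evolve : ∀ t x, η (t + 1) x =
      (S (t + 1))ᶜ.indicator (η t) x
        + (1 / (2 * (d : ℝ))) * ∑ i : Fin d,
            ((S (t + 1)).indicator (η t) (nbr x i 1)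
              + (S (t + 1)).indicator (η t) (nbr x i (-1)))

namespace SplittingModel

variable {d : ℕ} {n h : ℝ}

/-- A valid splitting order: some unstable site splits whenever there is an unstable
site, and every site that is unstable at some time eventually splits. -/
def Valid (M : SplittingModel d n h) : Prop :=
  (∀ t, {x | 1 ≤ M.η t x}.Nonempty → (M.S (t + 1)).Nonempty) ∧
    (∀ t x, 1 ≤ M.η t x → ∃ t₀, 1 ≤ t₀ ∧ x ∈ M.S (t + t₀))

/-- The parallel splitting order (the splitting automaton): at every time step,
every unstable site splits. -/
def Parallel (M : SplittingModel d n h) : Prop :=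
  ∀ t, M.S (t + 1) = {x | 1 ≤ M.η t x}

/-- The set of sites that split at least once up to (and including) time `t`. -/
def Tt (M : SplittingModel d n h) (t : ℕ) : Set (Fin d → ℤ) :=
  ⋃ t' ∈ Set.Icc 1 t, M.S t'

/-- The set of sites that split at least once. -/
def T (M : SplittingModel d n h) : Set (Fin d → ℤ) :=
  ⋃ t, M.S t

/-- The model stabilizes: every site splits only finitely many times. -/
def Stabilizes (M : SplittingModel d n h) : Prop :=
  ∀ x, {t | x ∈ M.S t}.Finite

/-- The total mass `u x` emitted from the site `x` during stabilization. -/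
noncomputable def emit (M : SplittingModel d n h) (x : Fin d → ℤ) : ℝ :=
  ∑' t : ℕ, (M.S (t + 1)).indicator (M.η t) x

end SplittingModel

/-- The cube `Q_k(x) = {y ∈ ℤ^d : max_i |x i - y i| ≤ k}` centered at `x` with
radius `k`. -/
noncomputable def Qcube {d : ℕ} (k : ℕ) (x : Fin d → ℤ) : Finset (Fin d → ℤ) :=
  Finset.Icc (fun i => x i - k) (fun i => x i + k)

/-- The discrete Laplacian `Δf(x) = (1/(2d)) ∑_{y ∼ x} f y - f x`. -/
noncomputable def lap {d : ℕ} (f : (Fin d → ℤ) → ℝ) (x : Fin d → ℤ) : ℝ :=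
  (1 / (2 * (d : ℝ))) * (∑ i : Fin d, (f (nbr x i 1) + f (nbr x i (-1)))) - f x

namespace SplittingModel

variable {d : ℕ} {n h : ℝ} (M : SplittingModel d n h)

/-- The mass emitted by `z` at step `t+1`. -/
noncomputable def out (t : ℕ) (z : Fin d → ℤ) : ℝ :=
  (M.S (t + 1)).indicator (M.η t) z

lemma out_nonneg (t : ℕ) (z : Fin d → ℤ) : 0 ≤ M.out t z := by
  unfold out
  by_cases hz : z ∈ M.S (t + 1)
  · rw [Set.indicator_of_mem hz]
    have h1 : 1 ≤ M.η t z := M.S_subset t hz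
    linarith
  · rw [Set.indicator_of_notMem hz]

lemma emit_eq_tsum_out (z : Fin d → ℤ) : M.emit z = ∑' t, M.out t z := rfl

lemma out_support_finite (hstab : M.Stabilizes) (z : Fin d → ℤ) :
    {t | M.out t z ≠ 0}.Finite := by
  have hpre : ((fun t => t + 1) ⁻¹' {t | z ∈ M.S t}).Finite :=
    Set.Finite.preimage (fun a _ b _ hab => by omega) (hstab z)
  refine Set.Finite.subset hpre ?_
  intro t ht
  simp only [Set.mem_setOf_eq] at ht
  simp only [Set.mem_preimage, Set.mem_setOf_eq]
  by_contra hz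
  exact ht (Set.indicator_of_notMem hz _)

lemma exists_out_bound (hstab : M.Stabilizes) (z : Fin d → ℤ) :
    ∃ T₀, ∀ t, T₀ ≤ t → M.out t z = 0 := by
  obtain ⟨b, hb⟩ := (M.out_support_finite hstab z).bddAbove
  refine ⟨b + 1, fun t ht => ?_⟩
  by_contra h0
  have : t ≤ b := hb h0
  omega

lemma out_summable (hstab : M.Stabilizes) (z : Fin d → ℤ) :
    Summable (fun t => M.out t z) := by
  obtain ⟨T₀, hT₀⟩ := M.exists_out_bound hstab z
  exact summable_of_ne_finset_zero (s := Finset.range T₀)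
    (fun t ht => hT₀ t (by simpa using ht))

lemma emit_eq_sum (hstab : M.Stabilizes) (z : Fin d → ℤ) :
    ∃ T₀, ∀ T, T₀ ≤ T → M.emit z = ∑ t ∈ Finset.range T, M.out t z := by
  obtain ⟨T₀, hT₀⟩ := M.exists_out_bound hstab z
  refine ⟨T₀, fun T hT => ?_⟩
  rw [emit_eq_tsum_out]
  exact tsum_eq_sum (fun t ht => hT₀ t (by simp only [Finset.mem_range, not_lt] at ht; omega))

lemma sum_out_le_emit (hstab : M.Stabilizes) (z : Fin d → ℤ) (T : ℕ) :
    ∑ t ∈ Finset.range T, M.out t z ≤ M.emit z :=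
  Summable.sum_le_tsum _ (fun t _ => M.out_nonneg t z) (M.out_summable hstab z)

lemma emit_nonneg (hstab : M.Stabilizes) (z : Fin d → ℤ) : 0 ≤ M.emit z :=
  tsum_nonneg (fun t => M.out_nonneg t z)

lemma eta_lt_one_eventually (hM : M.Valid) (hstab : M.Stabilizes) (z : Fin d → ℤ) :
    ∃ τ, ∀ t, τ ≤ t → M.η t z < 1 := by
  obtain ⟨b, hb⟩ := (hstab z).bddAbove
  refine ⟨b + 1, fun t ht => ?_⟩
  by_contra h1
  push_neg at h1
  obtain ⟨t₀, ht₀, hmem⟩ := hM.2 t z h1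
  have : t + t₀ ≤ b := hb hmem
  omega

/-- The mass flowing into `z` at step `t+1`. -/
noncomputable def flow (t : ℕ) (z : Fin d → ℤ) : ℝ :=
  (1 / (2 * (d : ℝ))) * ∑ i : Fin d, (M.out t (nbr z i 1) + M.out t (nbr z i (-1)))

lemma eta_succ (t : ℕ) (z : Fin d → ℤ) :
    M.η (t + 1) z = M.η t z - M.out t z + M.flow t z := by
  rw [M.evolve t z]
  unfold flow out
  by_cases hz : z ∈ M.S (t + 1)
  · rw [Set.indicator_of_notMem (by simpa using hz), Set.indicator_of_mem hz]
    ring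
  · rw [Set.indicator_of_mem (by simpa using hz), Set.indicator_of_notMem hz]
    ring

lemma balance (T : ℕ) (z : Fin d → ℤ) :
    M.η T z = M.η 0 z + ∑ t ∈ Finset.range T, (M.flow t z - M.out t z) := by
  induction T with
  | zero => simp
  | succ T ih => rw [Finset.sum_range_succ, M.eta_succ T z, ih]; ring

/-- Key step: the emission of a neighbor of `z` is controlled by the emission of `z`. -/
lemma emit_nbr_le (hd : 1 ≤ d) (hM : M.Valid) (hstab : M.Stabilizes)
    (h0 : ∀ z, h ≤ M.η 0 z) (z : Fin d → ℤ) (i : Fin d) (ε : ℤ)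
    (hε : ε = 1 ∨ ε = -1) :
    M.emit (nbr z i ε) ≤ 2 * d * (1 - h) + 2 * d * M.emit z := by
  have hdpos : (0:ℝ) < (d : ℝ) := by exact_mod_cast Nat.lt_of_lt_of_le Nat.zero_lt_one hd
  set w := nbr z i ε with hw
  obtain ⟨τ, hτ⟩ := M.eta_lt_one_eventually hM hstab z
  obtain ⟨T₀, hT₀⟩ := M.emit_eq_sum hstab w
  set T := max τ T₀ with hTdef
  have hηT : M.η T z < 1 := hτ T (le_max_left _ _)
  have hbal := M.balance T z
  rw [Finset.sum_sub_distrib] at hbal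
  have hupper : ∑ t ∈ Finset.range T, M.flow t z ≤ (1 - h) + M.emit z := by
    have h1 := h0 z
    have h2 := M.sum_out_le_emit hstab z T
    linarith
  have hlower : ∀ t, (1 / (2 * (d:ℝ))) * M.out t w ≤ M.flow t z := by
    intro t
    unfold flow
    apply mul_le_mul_of_nonneg_left _ (by positivity)
    have hterm : M.out t w ≤ M.out t (nbr z i 1) + M.out t (nbr z i (-1)) := by
      rcases hε with rfl | rfl
      · have := M.out_nonneg t (nbr z i (-1)); rw [hw]; linarith
      · have := M.out_nonneg t (nbr z i 1); rw [hw]; linarith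
    refine le_trans hterm ?_
    exact Finset.single_le_sum
      (f := fun j => M.out t (nbr z j 1) + M.out t (nbr z j (-1)))
      (fun j _ => add_nonneg (M.out_nonneg t _) (M.out_nonneg t _)) (Finset.mem_univ i)
  have hsum : (1 / (2 * (d:ℝ))) * ∑ t ∈ Finset.range T, M.out t w
      ≤ ∑ t ∈ Finset.range T, M.flow t z := by
    rw [Finset.mul_sum]
    exact Finset.sum_le_sum (fun t _ => hlower t)
  have hemitw : M.emit w = ∑ t ∈ Finset.range T, M.out t w := hT₀ T (le_max_right _ _)
  have hkey : (1 / (2 * (d:ℝ))) * M.emit w ≤ (1 - h) + M.emit z := by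
    rw [hemitw]; linarith
  have hdne : (d:ℝ) ≠ 0 := ne_of_gt hdpos
  have h2 : 2 * (d:ℝ) * ((1 / (2 * (d:ℝ))) * M.emit w) = M.emit w := by
    field_simp
  nlinarith [mul_le_mul_of_nonneg_left hkey (by linarith : (0:ℝ) ≤ 2 * (d:ℝ))]

lemma emit_zero_of_not_T (z : Fin d → ℤ) (hz : z ∉ M.T) : M.emit z = 0 := by
  rw [emit_eq_tsum_out]
  have : ∀ t, M.out t z = 0 := by
    intro t
    apply Set.indicator_of_notMem
    intro hmem
    exact hz (Set.mem_iUnion.2 ⟨t + 1, hmem⟩)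
  simp [this]

/-- The chain bound: induct along a nearest-neighbor path from a non-splitting site. -/
lemma chain (hd : 1 ≤ d) (hh : h < 1) (hM : M.Valid) (hstab : M.Stabilizes)
    (h0 : ∀ z, h ≤ M.η 0 z) (y : Fin d → ℤ) (hy : M.emit y = 0) :
    ∀ m : ℕ, ∀ z : Fin d → ℤ, (∑ i, (z i - y i).natAbs) ≤ m →
      M.emit z ≤ 2 * (1 - h) * ((2 * (d:ℝ)) ^ m - 1) := by
  intro m
  induction m with
  | zero =>
    intro z hz
    have hzy : z = y := by
      funext j
      have hall : ∀ j ∈ Finset.univ, (z j - y j).natAbs = 0 :=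
        Finset.sum_eq_zero_iff.mp (Nat.le_zero.mp hz)
      have := hall j (Finset.mem_univ j)
      omega
    rw [hzy, hy]
    simp
  | succ m ih =>
    intro z hz
    have h2d : (2:ℝ) ≤ 2 * (d:ℝ) := by
      have : (1:ℝ) ≤ (d:ℝ) := by exact_mod_cast hd
      linarith
    have h1h : (0:ℝ) < 1 - h := by linarith
    by_cases hcase : (∑ i, (z i - y i).natAbs) ≤ m
    · refine le_trans (ih z hcase) ?_
      have hpow : (2 * (d:ℝ)) ^ m ≤ (2 * (d:ℝ)) ^ (m + 1) :=
        pow_le_pow_right₀ (by linarith) (Nat.le_succ m)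
      nlinarith
    · have hne : ∃ i, z i ≠ y i := by
        by_contra hall
        push_neg at hall
        have : ∑ i, (z i - y i).natAbs = 0 :=
          Finset.sum_eq_zero (fun i _ => by rw [hall i]; simp)
        omega
      obtain ⟨i, hi⟩ := hne
      set ε : ℤ := if z i < y i then 1 else -1 with hεdef
      have hε : ε = 1 ∨ ε = -1 := by
        rw [hεdef]; split_ifs <;> simp
      set w := nbr z i ε with hwdef
      have hwi : w i = z i + ε := by
        rw [hwdef]; unfold nbr; rw [Function.update_self]
      have hwj : ∀ j, j ≠ i → w j = z j := by
        intro j hj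
        rw [hwdef]; unfold nbr; rw [Function.update_of_ne hj]
      have hkey : (w i - y i).natAbs + 1 = (z i - y i).natAbs := by
        by_cases hlt : z i < y i
        · have hε1 : ε = 1 := if_pos hlt
          rw [hwi, hε1]; omega
        · have hε1 : ε = -1 := if_neg hlt
          rw [hwi, hε1]; omega
      have hdist : (∑ j, (w j - y j).natAbs) ≤ m := by
        have hsw : ∑ j, (w j - y j).natAbs
            = (w i - y i).natAbs + ∑ j ∈ Finset.univ.erase i, (w j - y j).natAbs :=
          (Finset.add_sum_erase _ _ (Finset.mem_univ i)).symm
        have hsz : ∑ j, (z j - y j).natAbs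
            = (z i - y i).natAbs + ∑ j ∈ Finset.univ.erase i, (z j - y j).natAbs :=
          (Finset.add_sum_erase _ _ (Finset.mem_univ i)).symm
        have heq : ∑ j ∈ Finset.univ.erase i, (w j - y j).natAbs
            = ∑ j ∈ Finset.univ.erase i, (z j - y j).natAbs :=
          Finset.sum_congr rfl (fun j hj => by rw [hwj j (Finset.ne_of_mem_erase hj)])
        omega
      have hz_eq : z = nbr w i (-ε) := by
        funext j
        by_cases hj : j = i
        · subst hj
          unfold nbr
          rw [Function.update_self, hwi]
          ring
        · unfold nbr
          rw [Function.update_of_ne hj]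
          exact (hwj j hj).symm
      have hstep : M.emit z ≤ 2 * d * (1 - h) + 2 * d * M.emit w := by
        rw [hz_eq]
        exact M.emit_nbr_le hd hM hstab h0 w i (-ε)
          (by rcases hε with h1 | h1 <;> omega)
      have hwb := ih w hdist
      have hpow1 : (1:ℝ) ≤ (2 * (d:ℝ)) ^ m := by
        calc (1:ℝ) = 1 ^ m := (one_pow m).symm
        _ ≤ (2 * (d:ℝ)) ^ m := pow_le_pow_left₀ (by norm_num) (by linarith) m
      calc M.emit z ≤ 2 * d * (1 - h) + 2 * d * M.emit w := hstep
        _ ≤ 2 * d * (1 - h) + 2 * d * (2 * (1 - h) * ((2 * (d:ℝ)) ^ m - 1)) := by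
            have := mul_le_mul_of_nonneg_left hwb (by linarith : (0:ℝ) ≤ 2 * (d:ℝ))
            linarith
        _ ≤ 2 * (1 - h) * ((2 * (d:ℝ)) ^ (m + 1) - 1) := by
            rw [pow_succ]
            nlinarith [mul_nonneg h1h.le (by linarith : (0:ℝ) ≤ 2 * (d:ℝ) - 2), hpow1]

/-- If `n < 1` (and `h < 1`), nothing is ever unstable and masses stay put. -/
lemma eta_lt_one_of_small (hn1 : n < 1) (hh : h < 1) : ∀ t z, M.η t z < 1 := by
  intro t
  induction t with
  | zero =>
    intro z
    by_cases hz : z = 0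
    · rw [hz, M.init_origin]; exact hn1
    · rw [M.init_other z hz]; exact hh
  | succ t ih =>
    have hS : M.S (t + 1) = ∅ := by
      rw [Set.eq_empty_iff_forall_notMem]
      intro z hz
      exact absurd (M.S_subset t hz) (not_le.2 (ih z))
    intro z
    rw [M.evolve t z, hS]
    simpa using ih z

lemma emit_zero_of_small (hn1 : n < 1) (hh : h < 1) (z : Fin d → ℤ) : M.emit z = 0 := by
  rw [emit_eq_tsum_out]
  have hout : ∀ t, M.out t z = 0 := by
    intro t
    apply Set.indicator_of_notMem
    intro hmem
    exact absurd (M.S_subset t hmem) (not_le.2 (M.eta_lt_one_of_small hn1 hh t z))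
  simp [hout]

end SplittingModel

lemma nat_dk_le (d k : ℕ) : d * k ≤ (2 * k + 1) ^ d := by
  induction d with
  | zero => simp
  | succ d ih =>
    have h1 : 1 ≤ (2 * k + 1) ^ d := Nat.one_le_pow _ _ (by omega)
    calc (d + 1) * k = d * k + k := by ring
      _ ≤ (2 * k + 1) ^ d + k := by omega
      _ ≤ (2 * k + 1) ^ d * (2 * k + 1) := by nlinarith
      _ = (2 * k + 1) ^ (d + 1) := (pow_succ _ _).symm

/-- For the splitting model on `ℤ^d` with any valid splitting order, `h < 1`,
`n ≥ 0`, assuming the model stabilizes: for `k ≥ 1` and every `x` with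
`Q_k(x) ⊄ T`, the emitted mass satisfies `u x < 2(1-h)(2d)^((2k+1)^d)`;
in particular the bound does not depend on `n`. -/
theorem emit_bound_outside {d : ℕ} (hd : 1 ≤ d) {n h : ℝ}
    (hh : h < 1) (hn : 0 ≤ n)
    (M : SplittingModel d n h) (hM : M.Valid) (hstab : M.Stabilizes)
    (k : ℕ) (hk : 1 ≤ k) (x : Fin d → ℤ) (hx : ¬ ∀ y ∈ Qcube k x, y ∈ M.T) :
    M.emit x < 2 * (1 - h) * (2 * (d : ℝ)) ^ ((2 * k + 1) ^ d) := by
  have hdpos : (1:ℝ) ≤ (d:ℝ) := by exact_mod_cast hd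
  have h2d : (2:ℝ) ≤ 2 * (d:ℝ) := by linarith
  have h1h : (0:ℝ) < 1 - h := by linarith
  have hpowpos : (0:ℝ) < (2 * (d:ℝ)) ^ ((2 * k + 1) ^ d) := by positivity
  have hrhs : (0:ℝ) < 2 * (1 - h) * (2 * (d:ℝ)) ^ ((2 * k + 1) ^ d) := by positivity
  by_cases hn1 : n < 1
  · rw [M.emit_zero_of_small hn1 hh x]
    exact hrhs
  · push_neg at hn1
    have h0 : ∀ z, h ≤ M.η 0 z := by
      intro z
      by_cases hz : z = 0
      · rw [hz, M.init_origin]; linarith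
      · rw [M.init_other z hz]
    push_neg at hx
    obtain ⟨y, hyQ, hyT⟩ := hx
    have hy0 : M.emit y = 0 := M.emit_zero_of_not_T y hyT
    -- distance from x to y is at most d * k
    have hdist : (∑ i, (x i - y i).natAbs) ≤ d * k := by
      have hmem := Finset.mem_Icc.mp hyQ
      have hle : ∀ i, (x i - y i).natAbs ≤ k := by
        intro i
        have h1 : x i - (k:ℤ) ≤ y i := hmem.1 i
        have h2 : y i ≤ x i + (k:ℤ) := hmem.2 i
        omega
      calc (∑ i, (x i - y i).natAbs) ≤ ∑ _i : Fin d, k :=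
            Finset.sum_le_sum (fun i _ => hle i)
        _ = d * k := by simp [Finset.sum_const, Finset.card_univ, Nat.mul_comm]
    have hchain := M.chain hd hh hM hstab h0 y hy0 (d * k) x hdist
    have hmono : (2 * (d:ℝ)) ^ (d * k) ≤ (2 * (d:ℝ)) ^ ((2 * k + 1) ^ d) :=
      pow_le_pow_right₀ (by linarith) (nat_dk_le d k)
    calc M.emit x ≤ 2 * (1 - h) * ((2 * (d:ℝ)) ^ (d * k) - 1) := hchain
      _ < 2 * (1 - h) * (2 * (d:ℝ)) ^ (d * k) := by nlinarith
      _ ≤ 2 * (1 - h) * (2 * (d:ℝ)) ^ ((2 * k + 1) ^ d) := by nlinarith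
end

section
/- (Mass balance after stabilization) Consider the splitting model on Z^d (d ≥ 1) with any valid splitting order, h < 1, n ≥ 0, and suppose the model stabilizes. Then for every site x the limit η_∞(x) = lim_{t→∞} η_t(x) exists, η_∞(x) < 1 for all x, η_∞(x) ≥ 0 for all x ∈ T, and the mass balance identity Δu(x) + (n−h)·δ_{0,x} = η_∞(x) − h holds for all x, i.e. η_∞(x) = η_0(x) + (1/(2d))·Σ_{y∼x} u(y) − u(x). -/
open scoped BigOperators

noncomputable def eStep {d : ℕ} {n h : ℝ} (M : SplittingModel d n h) (t : ℕ) :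
    (Fin d → ℤ) → ℝ :=
  (M.S (t + 1)).indicator (M.η t)

lemma eStep_nonneg {d : ℕ} {n h : ℝ} (M : SplittingModel d n h) (t : ℕ) (y : Fin d → ℤ) :
    0 ≤ eStep M t y :=
  Set.indicator_nonneg (fun z hz => le_trans zero_le_one (M.S_subset t hz)) y

lemma evolve' {d : ℕ} {n h : ℝ} (M : SplittingModel d n h) (t : ℕ) (x : Fin d → ℤ) :
    M.η (t + 1) x = M.η t x - eStep M t x
      + (1 / (2 * (d : ℝ))) * ∑ i : Fin d, (eStep M t (nbr x i 1) + eStep M t (nbr x i (-1))) := by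
  rw [M.evolve t x]
  have hind : (M.S (t+1))ᶜ.indicator (M.η t) x = M.η t x - (M.S (t+1)).indicator (M.η t) x := by
    by_cases hx : x ∈ M.S (t+1)
    · rw [Set.indicator_of_notMem (by simpa using hx), Set.indicator_of_mem hx]; ring
    · rw [Set.indicator_of_mem (by simpa using hx), Set.indicator_of_notMem hx]; ring
  rw [hind]; rfl

lemma eta_eq {d : ℕ} {n h : ℝ} (M : SplittingModel d n h) (x : Fin d → ℤ) (T : ℕ) :
    M.η T x = M.η 0 x + ∑ t ∈ Finset.range T,
      ((1 / (2 * (d : ℝ))) * ∑ i : Fin d, (eStep M t (nbr x i 1) + eStep M t (nbr x i (-1)))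
        - eStep M t x) := by
  induction T with
  | zero => simp
  | succ T ih => rw [Finset.sum_range_succ, evolve' M T x, ih]; ring

/-- Mass balance after stabilization: for the splitting model on `ℤ^d` with any
valid splitting order, `h < 1`, `n ≥ 0`, assuming the model stabilizes, the limit
configuration `η_∞` exists pointwise, is everywhere `< 1`, is nonnegative on `T`,
and satisfies `Δu(x) + (n-h)δ_{0,x} = η_∞(x) - h`, i.e.
`η_∞(x) = η_0(x) + (1/(2d)) ∑_{y ∼ x} u y - u x`. -/
theorem mass_balance {d : ℕ} (hd : 1 ≤ d) {n h : ℝ}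
    (hh : h < 1) (hn : 0 ≤ n)
    (M : SplittingModel d n h) (hM : M.Valid) (hstab : M.Stabilizes) :
    ∃ ηinf : (Fin d → ℤ) → ℝ,
      (∀ x, Filter.Tendsto (fun t => M.η t x) Filter.atTop (nhds (ηinf x))) ∧
      (∀ x, ηinf x < 1) ∧
      (∀ x ∈ M.T, 0 ≤ ηinf x) ∧
      (∀ x, lap M.emit x + (n - h) * (if x = 0 then (1 : ℝ) else 0) = ηinf x - h) ∧
      (∀ x, ηinf x = M.η 0 x
          + (1 / (2 * (d : ℝ))) * (∑ i : Fin d, (M.emit (nbr x i 1) + M.emit (nbr x i (-1))))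
          - M.emit x) := by
  classical
  have hNex : ∀ x : Fin d → ℤ, ∃ N : ℕ, ∀ t, N ≤ t → x ∉ M.S t := by
    intro x
    obtain ⟨N, hN⟩ := (hstab x).bddAbove
    exact ⟨N + 1, fun t ht hmem => absurd (hN hmem) (by omega)⟩
  choose N hN using hNex
  set T₀ : (Fin d → ℤ) → ℕ := fun x =>
    max (N x) (Finset.univ.sup fun i : Fin d => max (N (nbr x i 1)) (N (nbr x i (-1))))
    with hT₀def
  have hT₀x : ∀ x, N x ≤ T₀ x := fun x => le_max_left _ _
  have hT₀1 : ∀ x (i : Fin d), N (nbr x i 1) ≤ T₀ x := by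
    intro x i
    have h1 : max (N (nbr x i 1)) (N (nbr x i (-1)))
        ≤ Finset.univ.sup (fun j : Fin d => max (N (nbr x j 1)) (N (nbr x j (-1)))) :=
      Finset.le_sup (f := fun j : Fin d => max (N (nbr x j 1)) (N (nbr x j (-1)))) (Finset.mem_univ i)
    exact le_trans (le_max_left _ _) (le_trans h1 (le_max_right _ _))
  have hT₀2 : ∀ x (i : Fin d), N (nbr x i (-1)) ≤ T₀ x := by
    intro x i
    have h1 : max (N (nbr x i 1)) (N (nbr x i (-1)))
        ≤ Finset.univ.sup (fun j : Fin d => max (N (nbr x j 1)) (N (nbr x j (-1)))) :=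
      Finset.le_sup (f := fun j : Fin d => max (N (nbr x j 1)) (N (nbr x j (-1)))) (Finset.mem_univ i)
    exact le_trans (le_max_right _ _) (le_trans h1 (le_max_right _ _))
  have hzero : ∀ (y : Fin d → ℤ) (t : ℕ), N y ≤ t + 1 → eStep M t y = 0 :=
    fun y t hy => Set.indicator_of_notMem (hN y (t + 1) hy) _
  have hconst : ∀ x t, T₀ x ≤ t → M.η t x = M.η (T₀ x) x := by
    intro x t ht
    induction t, ht using Nat.le_induction with
    | base => rfl
    | succ t ht ih =>
      rw [evolve' M t x, ih, hzero x t (by have := hT₀x x; omega)]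
      have hs : ∀ i ∈ (Finset.univ : Finset (Fin d)),
          eStep M t (nbr x i 1) + eStep M t (nbr x i (-1)) = 0 := fun i _ => by
        rw [hzero _ t (by have := hT₀1 x i; omega), hzero _ t (by have := hT₀2 x i; omega)]
        ring
      rw [Finset.sum_congr rfl hs]
      simp
  have hemit : ∀ (y : Fin d → ℤ) (T : ℕ), N y ≤ T →
      M.emit y = ∑ t ∈ Finset.range T, eStep M t y := by
    intro y T hT
    have h0 : M.emit y = ∑' t, eStep M t y := rfl
    rw [h0]
    refine tsum_eq_sum fun t ht => hzero y t ?_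
    simp only [Finset.mem_range, not_lt] at ht
    omega
  have key : ∀ x, M.η (T₀ x) x = M.η 0 x
      + (1 / (2 * (d : ℝ))) * (∑ i : Fin d, (M.emit (nbr x i 1) + M.emit (nbr x i (-1))))
      - M.emit x := by
    intro x
    rw [eta_eq M x (T₀ x), hemit x (T₀ x) (hT₀x x)]
    have h2 : ∑ i : Fin d, (M.emit (nbr x i 1) + M.emit (nbr x i (-1)))
        = ∑ i : Fin d, ((∑ t ∈ Finset.range (T₀ x), eStep M t (nbr x i 1))
            + ∑ t ∈ Finset.range (T₀ x), eStep M t (nbr x i (-1))) :=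
      Finset.sum_congr rfl fun i _ => by rw [hemit _ _ (hT₀1 x i), hemit _ _ (hT₀2 x i)]
    rw [h2, Finset.sum_sub_distrib, ← Finset.mul_sum, Finset.sum_comm]
    simp only [Finset.sum_add_distrib]
    ring
  have hcnonneg : (0:ℝ) ≤ 1 / (2 * (d : ℝ)) := by positivity
  refine ⟨fun x => M.η (T₀ x) x, ?_, ?_, ?_, ?_, ?_⟩
  · intro x
    refine Filter.Tendsto.congr' ?_ tendsto_const_nhds
    exact Filter.eventually_atTop.2 ⟨T₀ x, fun t ht => (hconst x t ht).symm⟩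
  · intro x
    by_contra hlt
    push_neg at hlt
    obtain ⟨t₀, ht₀, hmem⟩ := hM.2 (T₀ x) x hlt
    exact hN x (T₀ x + t₀) (by have := hT₀x x; omega) hmem
  · intro x hx
    show 0 ≤ M.η (T₀ x) x
    obtain ⟨t, ht⟩ : ∃ t, x ∈ M.S t := by
      simpa [SplittingModel.T] using hx
    obtain ⟨s, rfl⟩ : ∃ s, t = s + 1 := by
      cases t with
      | zero => rw [M.S_zero] at ht; exact absurd ht (Set.notMem_empty x)
      | succ s => exact ⟨s, rfl⟩
    have hsum : ∀ r : ℕ,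
        0 ≤ ∑ i : Fin d, (eStep M r (nbr x i 1) + eStep M r (nbr x i (-1))) := fun r =>
      Finset.sum_nonneg fun i _ => add_nonneg (eStep_nonneg M r _) (eStep_nonneg M r _)
    have hbase : 0 ≤ M.η (s+1) x := by
      rw [evolve' M s x]
      have h1 : eStep M s x = M.η s x := Set.indicator_of_mem ht _
      have h2 := mul_nonneg hcnonneg (hsum s)
      rw [h1]
      linarith
    have hmono : ∀ r, s + 1 ≤ r → 0 ≤ M.η r x := by
      intro r hr
      induction r, hr using Nat.le_induction with
      | base => exact hbase
      | succ r hr ih =>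
        rw [evolve' M r x]
        have h1 : eStep M r x ≤ M.η r x := by
          by_cases hxx : x ∈ M.S (r+1)
          · exact le_of_eq (Set.indicator_of_mem hxx _)
          · rw [show eStep M r x = 0 from Set.indicator_of_notMem hxx _]; exact ih
        have h2 := mul_nonneg hcnonneg (hsum r)
        linarith
    have heq : M.η (max (T₀ x) (s+1)) x = M.η (T₀ x) x := hconst x _ (le_max_left _ _)
    rw [← heq]
    exact hmono _ (le_max_right _ _)
  · intro x
    have hk := key x
    show lap M.emit x + (n - h) * (if x = 0 then (1:ℝ) else 0) = M.η (T₀ x) x - h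
    unfold lap
    by_cases hx : x = 0
    · subst hx
      rw [if_pos rfl]
      rw [M.init_origin] at hk
      linarith
    · rw [if_neg hx]
      rw [M.init_other x hx] at hk
      linarith
  · exact key
end

section
/- Consider the splitting model on Z^d (d ≥ 1) with any valid splitting order, any h < 1 and n ≥ 0. If every site of Z^d splits at least once (T = Z^d), then every site splits infinitely often; in particular the model does not stabilize. -/
open scoped BigOperators

namespace SplittingModel

variable {d : ℕ} {n h : ℝ}

/-- Real-valued indicator of membership in `M.S s`. -/
noncomputable def chi (M : SplittingModel d n h) (s : ℕ) (z : Fin d → ℤ) : ℝ :=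
  (M.S s).indicator (fun _ => (1 : ℝ)) z

/-- Sum of the indicators of the neighbors of `x` splitting at time `s`. -/
noncomputable def chiSum (M : SplittingModel d n h) (s : ℕ) (x : Fin d → ℤ) : ℝ :=
  ∑ i : Fin d, (M.chi s (nbr x i 1) + M.chi s (nbr x i (-1)))

lemma chi_nonneg (M : SplittingModel d n h) (s : ℕ) (z : Fin d → ℤ) : 0 ≤ M.chi s z :=
  Set.indicator_nonneg (fun _ _ => zero_le_one) z

lemma chi_of_mem (M : SplittingModel d n h) {s : ℕ} {z : Fin d → ℤ} (hz : z ∈ M.S s) :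
    M.chi s z = 1 := Set.indicator_of_mem hz _

lemma chi_le_ind (M : SplittingModel d n h) (t : ℕ) (z : Fin d → ℤ) :
    M.chi (t + 1) z ≤ (M.S (t + 1)).indicator (M.η t) z := by
  by_cases hz : z ∈ M.S (t + 1)
  · rw [chi, Set.indicator_of_mem hz, Set.indicator_of_mem hz]
    exact M.S_subset t hz
  · rw [chi, Set.indicator_of_notMem hz, Set.indicator_of_notMem hz]

lemma chiSum_nonneg (M : SplittingModel d n h) (s : ℕ) (x : Fin d → ℤ) : 0 ≤ M.chiSum s x :=
  Finset.sum_nonneg fun i _ => add_nonneg (M.chi_nonneg s _) (M.chi_nonneg s _)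

lemma inv2d_nonneg {d : ℕ} : (0 : ℝ) ≤ 1 / (2 * (d : ℝ)) := by positivity

lemma eta_step_ge (M : SplittingModel d n h) (t : ℕ) (x : Fin d → ℤ) :
    (M.S (t + 1))ᶜ.indicator (M.η t) x + (1 / (2 * (d : ℝ))) * M.chiSum (t + 1) x
      ≤ M.η (t + 1) x := by
  rw [M.evolve t x]
  refine add_le_add_right (mul_le_mul_of_nonneg_left ?_ inv2d_nonneg) _
  exact Finset.sum_le_sum fun i _ => add_le_add (M.chi_le_ind t _) (M.chi_le_ind t _)

lemma not_split_step (M : SplittingModel d n h) {t : ℕ} {x : Fin d → ℤ}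
    (hx : x ∉ M.S (t + 1)) :
    M.η t x + (1 / (2 * (d : ℝ))) * M.chiSum (t + 1) x ≤ M.η (t + 1) x := by
  have h1 := M.eta_step_ge t x
  rwa [Set.indicator_of_mem (by simpa using hx) (M.η t)] at h1

lemma split_step (M : SplittingModel d n h) {t : ℕ} {x : Fin d → ℤ}
    (hx : x ∈ M.S (t + 1)) :
    (1 / (2 * (d : ℝ))) * M.chiSum (t + 1) x ≤ M.η (t + 1) x := by
  have h1 := M.eta_step_ge t x
  rwa [Set.indicator_of_notMem (by simpa using hx) (M.η t), zero_add] at h1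

/-- Master lemma: if `x` does not split in the time interval `(m, t]`, then its mass
at time `t` is at least its mass at time `m` plus `1/(2d)` per neighbor split in that
interval. -/
lemma ml (M : SplittingModel d n h) (x : Fin d → ℤ) (m t : ℕ) (hmt : m ≤ t)
    (hns : ∀ s, m < s → s ≤ t → x ∉ M.S s) :
    M.η m x + (1 / (2 * (d : ℝ))) * ∑ s ∈ Finset.Ioc m t, M.chiSum s x ≤ M.η t x := by
  induction t, hmt using Nat.le_induction with
  | base => simp
  | succ t ht ih =>
    have h1 : x ∉ M.S (t + 1) := hns (t + 1) (by omega) le_rfl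
    have h2 := M.not_split_step h1
    have h3 := ih fun s hs hs' => hns s hs (by omega)
    rw [Finset.sum_Ioc_succ_top ht, mul_add, ← add_assoc]
    linarith

lemma exists_split (M : SplittingModel d n h) (hT : M.T = Set.univ) (x : Fin d → ℤ) :
    ∃ s, x ∈ M.S s := by
  have hx : x ∈ M.T := by rw [hT]; exact Set.mem_univ x
  exact Set.mem_iUnion.mp hx

lemma split_pos (M : SplittingModel d n h) {s : ℕ} {x : Fin d → ℤ} (hx : x ∈ M.S s) :
    1 ≤ s := by
  rcases Nat.eq_zero_or_pos s with rfl | hs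
  · rw [M.S_zero] at hx; exact absurd hx (Set.notMem_empty x)
  · exact hs

/-- If a slot-neighbor of `x` splits at time `s`, then `chiSum s x ≥ 1`. -/
lemma chiSum_ge_one (M : SplittingModel d n h) {s : ℕ} {x : Fin d → ℤ} (i : Fin d) (ε : ℤ)
    (hε : ε = 1 ∨ ε = -1) (hy : nbr x i ε ∈ M.S s) : 1 ≤ M.chiSum s x := by
  have hterm : 1 ≤ M.chi s (nbr x i 1) + M.chi s (nbr x i (-1)) := by
    rcases hε with rfl | rfl
    · have := M.chi_of_mem hy
      have := M.chi_nonneg s (nbr x i (-1))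
      linarith
    · have := M.chi_of_mem hy
      have := M.chi_nonneg s (nbr x i 1)
      linarith
  calc (1 : ℝ) ≤ M.chi s (nbr x i 1) + M.chi s (nbr x i (-1)) := hterm
    _ ≤ M.chiSum s x := by
        rw [chiSum]
        exact Finset.single_le_sum
          (f := fun j => M.chi s (nbr x j 1) + M.chi s (nbr x j (-1)))
          (fun j _ => add_nonneg (M.chi_nonneg s _) (M.chi_nonneg s _))
          (Finset.mem_univ i)

/-- After its last split, a site has nonnegative mass. -/
lemma eta_last_nonneg (M : SplittingModel d n h) {τ : ℕ} {x : Fin d → ℤ}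
    (hx : x ∈ M.S τ) : 0 ≤ M.η τ x := by
  obtain ⟨t, rfl⟩ : ∃ t, τ = t + 1 := ⟨τ - 1, by have := M.split_pos hx; omega⟩
  have h1 := M.split_step hx
  have h2 := M.chiSum_nonneg (t + 1) x
  nlinarith [inv2d_nonneg (d := d)]

/-- If `x` splits finitely often (and at least once), then each of its slot-neighbors
splits finitely often. -/
lemma nbr_finite {d : ℕ} {n h : ℝ} (hd : 1 ≤ d) (M : SplittingModel d n h) (hM : M.Valid)
    {x : Fin d → ℤ} (hfin : {t | x ∈ M.S t}.Finite) (hne : {t | x ∈ M.S t}.Nonempty)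
    (i : Fin d) (ε : ℤ) (hε : ε = 1 ∨ ε = -1) :
    {t | nbr x i ε ∈ M.S t}.Finite := by
  by_contra hinf
  replace hinf : {t | nbr x i ε ∈ M.S t}.Infinite := hinf
  -- last split time of x
  set F := hfin.toFinset with hF
  have hFne : F.Nonempty := by
    rwa [hF, Set.Finite.toFinset_nonempty]
  set τ := F.max' hFne with hτ
  have hτmem : x ∈ M.S τ := hfin.mem_toFinset.mp (F.max'_mem hFne)
  have hτmax : ∀ s, x ∈ M.S s → s ≤ τ := fun s hs =>
    F.le_max' s (hfin.mem_toFinset.mpr hs)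
  -- pick 2*d split times of the neighbor, all > τ
  have hinf2 : ({t | nbr x i ε ∈ M.S t} \ Set.Iic τ).Infinite :=
    hinf.diff (Set.finite_Iic τ)
  obtain ⟨G, hGsub, hGcard⟩ := hinf2.exists_subset_card_eq (2 * d)
  have hGne : G.Nonempty := by
    rw [← Finset.card_pos, hGcard]; omega
  set tm := G.max' hGne with htm
  have hGIoc : ∀ s ∈ G, s ∈ Finset.Ioc τ tm := by
    intro s hs
    have h1 := hGsub hs
    rw [Finset.mem_Ioc]
    exact ⟨by simpa using h1.2, G.le_max' s hs⟩
  have hτtm : τ ≤ tm := by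
    have := hGIoc tm (G.max'_mem hGne)
    rw [Finset.mem_Ioc] at this
    omega
  have hns : ∀ s, τ < s → s ≤ tm → x ∉ M.S s := by
    intro s hs _ hmem
    exact absurd (hτmax s hmem) (by omega)
  have hmain := M.ml x τ tm hτtm hns
  have hsumG : (2 * d : ℝ) ≤ ∑ s ∈ Finset.Ioc τ tm, M.chiSum s x := by
    calc (2 * d : ℝ) = ∑ _s ∈ G, (1 : ℝ) := by
          rw [Finset.sum_const, hGcard]; push_cast; ring
      _ ≤ ∑ s ∈ G, M.chiSum s x := by
          refine Finset.sum_le_sum fun s hs => ?_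
          exact M.chiSum_ge_one i ε hε (hGsub hs).1
      _ ≤ ∑ s ∈ Finset.Ioc τ tm, M.chiSum s x :=
          Finset.sum_le_sum_of_subset_of_nonneg
            (fun s hs => hGIoc s hs)
            (fun s _ _ => M.chiSum_nonneg s x)
  have hd' : (0 : ℝ) < 2 * (d : ℝ) := by
    have : (1 : ℝ) ≤ (d : ℝ) := by exact_mod_cast hd
    linarith
  have h1 : (1 : ℝ) ≤ (1 / (2 * (d : ℝ))) * ∑ s ∈ Finset.Ioc τ tm, M.chiSum s x := by
    rw [div_mul_eq_mul_div, one_mul, le_div_iff₀ hd']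
    linarith
  have h0 := M.eta_last_nonneg hτmem
  have hunst : 1 ≤ M.η tm x := by linarith
  obtain ⟨t₀, ht₀, hsplit⟩ := hM.2 tm x hunst
  have := hτmax _ hsplit
  omega

/-- If one site splits finitely often, then (by connectivity of `ℤ^d`) every site
splits finitely often. -/
lemma all_finite (hd : 1 ≤ d) (M : SplittingModel d n h) (hM : M.Valid)
    (hT : M.T = Set.univ) {x₀ : Fin d → ℤ} (h0 : {t | x₀ ∈ M.S t}.Finite) :
    ∀ y : Fin d → ℤ, {t | y ∈ M.S t}.Finite := by
  have key : ∀ k : ℕ, ∀ y : Fin d → ℤ,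
      (∑ i, (x₀ i - y i).natAbs) = k → {t | y ∈ M.S t}.Finite := by
    intro k
    induction k with
    | zero =>
      intro y hy
      have hxy : y = x₀ := by
        funext j
        have hj := Finset.sum_eq_zero_iff.mp hy j (Finset.mem_univ j)
        omega
      rwa [hxy]
    | succ k ih =>
      intro y hy
      have hne : ∃ j, x₀ j ≠ y j := by
        by_contra hno
        push_neg at hno
        have : (∑ i, (x₀ i - y i).natAbs) = 0 :=
          Finset.sum_eq_zero fun i _ => by rw [hno i]; simp
        omega
      obtain ⟨j, hj⟩ := hne
      have hsplit : ∀ z : Fin d → ℤ,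
          (∑ i, (x₀ i - z i).natAbs)
            = (∑ i ∈ Finset.univ.erase j, (x₀ i - z i).natAbs) + (x₀ j - z j).natAbs := by
        intro z
        rw [Finset.sum_erase_add _ _ (Finset.mem_univ j)]
      set ε : ℤ := if y j < x₀ j then 1 else -1 with hε
      set y' := nbr y j ε with hy'
      have hy'j : y' j = y j + ε := by
        rw [hy', nbr, Function.update_self]
      have hy'ne : ∀ l, l ≠ j → y' l = y l := by
        intro l hl
        rw [hy', nbr, Function.update_of_ne hl]
      have hrest : ∑ i ∈ Finset.univ.erase j, (x₀ i - y' i).natAbs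
          = ∑ i ∈ Finset.univ.erase j, (x₀ i - y i).natAbs :=
        Finset.sum_congr rfl fun l hl => by
          rw [hy'ne l (Finset.ne_of_mem_erase hl)]
      have hdist : (∑ i, (x₀ i - y' i).natAbs) = k := by
        rw [hsplit y', hrest, hy'j]
        rw [hsplit y] at hy
        have : (x₀ j - (y j + ε)).natAbs + 1 = (x₀ j - y j).natAbs := by
          rw [hε]
          split_ifs with hlt <;> omega
        omega
      have hfin' := ih y' hdist
      have hyy : y = nbr y' j (-ε) := by
        funext l
        by_cases hl : l = j
        · subst hl
          rw [nbr, Function.update_self, hy'j]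
          ring
        · rw [nbr, Function.update_of_ne hl, hy'ne l hl]
      have hεcase : -ε = 1 ∨ -ε = -1 := by
        rw [hε]; split_ifs <;> simp
      rw [hyy]
      exact nbr_finite hd M hM hfin' (M.exists_split hT y') j (-ε) hεcase
  intro y
  exact key (∑ i, (x₀ i - y i).natAbs) y rfl

/-- The heart of the argument: if every site splits at least once and every site
splits only finitely often, we get a contradiction by looking at a site whose last
split is earliest. -/
lemma not_all_finite (hd : 1 ≤ d) (M : SplittingModel d n h) (hM : M.Valid)
    (hT : M.T = Set.univ) (hall : ∀ x : Fin d → ℤ, {t | x ∈ M.S t}.Finite) : False := by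
  have hne : ∀ x : Fin d → ℤ, (hall x).toFinset.Nonempty := fun x =>
    (hall x).toFinset_nonempty.mpr (M.exists_split hT x)
  set τ : (Fin d → ℤ) → ℕ := fun x => (hall x).toFinset.max' (hne x) with hτdef
  have hτmem : ∀ x, x ∈ M.S (τ x) := fun x =>
    (hall x).mem_toFinset.mp (Finset.max'_mem _ (hne x))
  have hτmax : ∀ x s, x ∈ M.S s → s ≤ τ x := fun x s hs =>
    Finset.le_max' _ s ((hall x).mem_toFinset.mpr hs)
  -- pick a site whose last split time is minimal
  have hKne : (Set.range τ).Nonempty := ⟨τ 0, ⟨0, rfl⟩⟩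
  obtain ⟨x₀, hx₀⟩ : ∃ x₀, τ x₀ = sInf (Set.range τ) := Nat.sInf_mem hKne
  set m := τ x₀ with hm
  have hmin : ∀ y, m ≤ τ y := fun y => hx₀.trans_le (Nat.sInf_le ⟨y, rfl⟩)
  -- the time by which all neighbors of x₀ have done their last split
  have hFinne : Nonempty (Fin d) := ⟨⟨0, hd⟩⟩
  have hPne : (Finset.univ : Finset (Fin d × Bool)).Nonempty := Finset.univ_nonempty
  set G : Finset ℕ :=
    (Finset.univ : Finset (Fin d × Bool)).image
      (fun p => τ (nbr x₀ p.1 (if p.2 then 1 else -1))) with hG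
  have hGne : G.Nonempty := hPne.image _
  set tm := G.max' hGne with htm
  have hslot : ∀ (i : Fin d) (ε : ℤ), ε = 1 ∨ ε = -1 →
      m ≤ τ (nbr x₀ i ε) ∧ τ (nbr x₀ i ε) ≤ tm := by
    intro i ε hcase
    refine ⟨hmin _, Finset.le_max' _ _ ?_⟩
    rw [hG]
    rcases hcase with rfl | rfl
    · exact Finset.mem_image.mpr ⟨(i, true), Finset.mem_univ _, rfl⟩
    · exact Finset.mem_image.mpr ⟨(i, false), Finset.mem_univ _, rfl⟩
  have hmtm : m ≤ tm := by
    obtain ⟨h1, h2⟩ := hslot ⟨0, hd⟩ 1 (Or.inl rfl)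
    omega
  -- mass lower bound at x₀ at time tm
  have hm1 : 1 ≤ m := M.split_pos (hτmem x₀)
  have hbase : (1 / (2 * (d : ℝ))) * M.chiSum m x₀ ≤ M.η m x₀ := by
    obtain ⟨t, ht⟩ : ∃ t, m = t + 1 := ⟨m - 1, by omega⟩
    rw [ht]
    exact M.split_step (by rw [← ht]; exact hτmem x₀)
  have hns : ∀ s, m < s → s ≤ tm → x₀ ∉ M.S s := by
    intro s hs _ hmem
    have := hτmax x₀ s hmem
    omega
  have hml := M.ml x₀ m tm hmtm hns
  -- each slot contributes at least 1 to the sum of chi over Icc m tm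
  have hslotsum : ∀ (i : Fin d) (ε : ℤ), ε = 1 ∨ ε = -1 →
      (1 : ℝ) ≤ ∑ s ∈ Finset.Icc m tm, M.chi s (nbr x₀ i ε) := by
    intro i ε hcase
    obtain ⟨h1, h2⟩ := hslot i ε hcase
    have hmem : τ (nbr x₀ i ε) ∈ Finset.Icc m tm := Finset.mem_Icc.mpr ⟨h1, h2⟩
    calc (1 : ℝ) = M.chi (τ (nbr x₀ i ε)) (nbr x₀ i ε) :=
          (M.chi_of_mem (hτmem _)).symm
      _ ≤ ∑ s ∈ Finset.Icc m tm, M.chi s (nbr x₀ i ε) :=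
          Finset.single_le_sum (fun s _ => M.chi_nonneg s _) hmem
  have hsum : (2 * (d : ℝ)) ≤ ∑ s ∈ Finset.Icc m tm, M.chiSum s x₀ := by
    calc (2 * (d : ℝ)) = ∑ _i : Fin d, (2 : ℝ) := by
          rw [Finset.sum_const, Finset.card_univ, Fintype.card_fin]
          push_cast; ring
      _ ≤ ∑ i : Fin d, ((∑ s ∈ Finset.Icc m tm, M.chi s (nbr x₀ i 1))
            + (∑ s ∈ Finset.Icc m tm, M.chi s (nbr x₀ i (-1)))) := by
          refine Finset.sum_le_sum fun i _ => ?_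
          have h1 := hslotsum i 1 (Or.inl rfl)
          have h2 := hslotsum i (-1) (Or.inr rfl)
          linarith
      _ = ∑ i : Fin d, ∑ s ∈ Finset.Icc m tm,
            (M.chi s (nbr x₀ i 1) + M.chi s (nbr x₀ i (-1))) :=
          Finset.sum_congr rfl fun i _ => Finset.sum_add_distrib.symm
      _ = ∑ s ∈ Finset.Icc m tm, M.chiSum s x₀ := by
          rw [Finset.sum_comm]
          rfl
  have hd' : (0 : ℝ) < 2 * (d : ℝ) := by
    have h1d : (1 : ℝ) ≤ (d : ℝ) := by exact_mod_cast hd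
    linarith
  have hIcc : ∑ s ∈ Finset.Icc m tm, M.chiSum s x₀
      = M.chiSum m x₀ + ∑ s ∈ Finset.Ioc m tm, M.chiSum s x₀ := by
    rw [Finset.Icc_eq_cons_Ioc hmtm, Finset.sum_cons]
  have hfinal : 1 ≤ M.η tm x₀ := by
    have h1 : (1 / (2 * (d : ℝ))) * ∑ s ∈ Finset.Icc m tm, M.chiSum s x₀ ≤ M.η tm x₀ := by
      rw [hIcc, mul_add]
      linarith
    have h2 : (1 : ℝ) ≤ (1 / (2 * (d : ℝ))) * ∑ s ∈ Finset.Icc m tm, M.chiSum s x₀ := by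
      rw [div_mul_eq_mul_div, one_mul, le_div_iff₀ hd']
      linarith
    linarith
  obtain ⟨t₀, ht₀, hsplit⟩ := hM.2 tm x₀ hfinal
  have hle := hτmax x₀ _ hsplit
  omega

end SplittingModel

/-- For the splitting model on `ℤ^d` with any valid splitting order, `h < 1`,
`n ≥ 0`: if every site splits at least once (`T = ℤ^d`), then every site splits
infinitely often; in particular the model does not stabilize. -/
theorem all_split_implies_infinite {d : ℕ} (hd : 1 ≤ d) {n h : ℝ}
    (hh : h < 1) (hn : 0 ≤ n)
    (M : SplittingModel d n h) (hM : M.Valid) (hT : M.T = Set.univ) :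
    (∀ x : Fin d → ℤ, {t | x ∈ M.S t}.Infinite) ∧ ¬ M.Stabilizes := by
  have hinf : ∀ x : Fin d → ℤ, {t | x ∈ M.S t}.Infinite := by
    intro x
    rw [Set.Infinite]
    intro hfin
    exact SplittingModel.not_all_finite hd M hM hT
      (SplittingModel.all_finite hd M hM hT hfin)
  exact ⟨hinf, fun hstab => SplittingModel.not_all_finite hd M hM hT hstab⟩
end
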